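/- Discrete Euler–Lagrange equations characterize stationarity of the discrete action (Equation 14): for a configuration q = (q_0,…,q_N), the following are equivalent: (i) DS_d(q)(δ) = 0 for every variation δ = (δ_0,…,δ_N) with δ_0 = 0 and δ_N = 0; (ii) for every n with 1 ≤ n ≤ N−1, the linear functional v ↦ D₁L_d(q_n, q_{n+1})(v) + D₂L_d(q_{n−1}, q_n)(v) − λ_n · (Dg(q_n)(v)) on ℝ^m is identically zero, i.e. the discrete Euler–Lagrange equation ∂L_d(q_n,q_{n+1})/∂q_n + ∂L_d(q_{n−1},q_n)/∂q_n − (Dg(q_n))ᵀ λ_n = 0 holds at every interior time step. -/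

import Mathlib

open Matrix Finset Fin.NatCast

noncomputable def dpCLM (l : ℕ) (w : Fin l → ℝ) : (Fin l → ℝ) →L[ℝ] ℝ :=
  LinearMap.toContinuousLinearMap
    { toFun := fun x => w ⬝ᵥ x
      map_add' := fun a b => dotProduct_add w a b
      map_smul' := fun c a => dotProduct_smul c w a }

@[simp] theorem dpCLM_apply (l : ℕ) (w x : Fin l → ℝ) : dpCLM l w x = w ⬝ᵥ x := rfl

/-- Discrete Euler–Lagrange equations characterize stationarity of the discrete
action (Equation 14): the discrete action is stationary with respect to all
variations vanishing at the endpoints iff the discrete Euler–Lagrange equation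
holds at every interior time step. -/
theorem discrete_euler_lagrange_iff_stationary (m l N : ℕ) (hN : 2 ≤ N)
    (Ld : (Fin m → ℝ) × (Fin m → ℝ) → ℝ) (hLd : Differentiable ℝ Ld)
    (g : (Fin m → ℝ) → (Fin l → ℝ)) (hg : Differentiable ℝ g)
    (lam : ℕ → Fin l → ℝ)
    (Sd : (Fin (N + 1) → Fin m → ℝ) → ℝ)
    (hSd : Sd = fun q => ∑ n ∈ range N,
      (Ld (q n, q (n + 1))
        - (1 / 2) * (lam n ⬝ᵥ g (q n) + lam (n + 1) ⬝ᵥ g (q (n + 1)))))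
    (q : Fin (N + 1) → Fin m → ℝ) :
    (∀ δ : Fin (N + 1) → Fin m → ℝ, δ 0 = 0 → δ (N : Fin (N + 1)) = 0 →
        fderiv ℝ Sd q δ = 0) ↔
    (∀ n, 1 ≤ n → n ≤ N - 1 → ∀ v : Fin m → ℝ,
        fderiv ℝ (fun x => Ld (x, q (n + 1))) (q n) v
          + fderiv ℝ (fun y => Ld (q (n - 1), y)) (q n) v
          - lam n ⬝ᵥ fderiv ℝ g (q n) v = 0) := by
  -- cast normalization
  have cAdd : ∀ k : ℕ, ((k + 1 : ℕ) : Fin (N + 1)) = (k : Fin (N + 1)) + 1 := fun k =>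
    Nat.cast_add_one k
  -- splitting the derivative of Ld into partial derivatives
  have hsplit : ∀ (a b u v : Fin m → ℝ),
      fderiv ℝ Ld (a, b) (u, v)
        = fderiv ℝ (fun x => Ld (x, b)) a u + fderiv ℝ (fun y => Ld (a, y)) b v := by
    intro a b u v
    have h1 : HasFDerivAt (fun x => Ld (x, b))
        ((fderiv ℝ Ld (a, b)).comp (ContinuousLinearMap.inl ℝ (Fin m → ℝ) (Fin m → ℝ))) a :=
      ((hLd (a, b)).hasFDerivAt).comp a (hasFDerivAt_prodMk_left a b)
    have h2 : HasFDerivAt (fun y => Ld (a, y))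
        ((fderiv ℝ Ld (a, b)).comp (ContinuousLinearMap.inr ℝ (Fin m → ℝ) (Fin m → ℝ))) b :=
      ((hLd (a, b)).hasFDerivAt).comp b (hasFDerivAt_prodMk_right a b)
    rw [h1.fderiv, h2.fderiv]
    simp only [ContinuousLinearMap.comp_apply, ContinuousLinearMap.inl_apply,
      ContinuousLinearMap.inr_apply, ← map_add, Prod.mk_add_mk, add_zero, zero_add]
  -- the two families of partial contributions
  set P : ℕ → (Fin m → ℝ) → ℝ := fun n v =>
    fderiv ℝ (fun x => Ld (x, q (↑n + 1))) (q ↑n) v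
      - (1 / 2) * (lam n ⬝ᵥ fderiv ℝ g (q ↑n) v) with hP
  set Q : ℕ → (Fin m → ℝ) → ℝ := fun n v =>
    fderiv ℝ (fun y => Ld (q ↑n, y)) (q (↑n + 1)) v
      - (1 / 2) * (lam (n + 1) ⬝ᵥ fderiv ℝ g (q (↑n + 1)) v) with hQ
  have hP0 : ∀ n, P n 0 = 0 := by intro n; simp [hP]
  have hQ0 : ∀ n, Q n 0 = 0 := by intro n; simp [hQ]
  -- the total derivative
  have hproj : ∀ j : Fin (N + 1),
      HasFDerivAt (fun q' : Fin (N + 1) → Fin m → ℝ => q' j)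
        (ContinuousLinearMap.proj (R := ℝ) j) q := fun j =>
    hasFDerivAt_apply (𝕜 := ℝ) j q
  set T : ℕ → ((Fin (N + 1) → Fin m → ℝ) →L[ℝ] ℝ) := fun n =>
    (fderiv ℝ Ld (q ↑n, q (↑n + 1))).comp
        ((ContinuousLinearMap.proj (R := ℝ) (↑n : Fin (N + 1))).prod
          (ContinuousLinearMap.proj (R := ℝ) ((↑n : Fin (N + 1)) + 1)))
      - (1 / 2 : ℝ) • ((dpCLM l (lam n)).comp
            ((fderiv ℝ g (q ↑n)).comp (ContinuousLinearMap.proj (R := ℝ) (↑n : Fin (N + 1))))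
          + (dpCLM l (lam (n + 1))).comp
            ((fderiv ℝ g (q (↑n + 1))).comp
              (ContinuousLinearMap.proj (R := ℝ) ((↑n : Fin (N + 1)) + 1)))) with hTdef
  have hT : ∀ n ∈ range N,
      HasFDerivAt (fun q' : Fin (N + 1) → Fin m → ℝ =>
          Ld (q' ↑n, q' (↑n + 1))
            - (1 / 2) * (lam n ⬝ᵥ g (q' ↑n) + lam (n + 1) ⬝ᵥ g (q' (↑n + 1))))
        (T n) q := by
    intro n _
    have h1 : HasFDerivAt (fun q' : Fin (N + 1) → Fin m → ℝ => (q' ↑n, q' (↑n + 1)))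
        ((ContinuousLinearMap.proj (R := ℝ) (↑n : Fin (N + 1))).prod
          (ContinuousLinearMap.proj (R := ℝ) ((↑n : Fin (N + 1)) + 1))) q :=
      (hproj _).prodMk (hproj _)
    have h2 := ((hLd (q ↑n, q (↑n + 1))).hasFDerivAt).comp q h1
    have h3 : HasFDerivAt (fun q' : Fin (N + 1) → Fin m → ℝ => lam n ⬝ᵥ g (q' ↑n))
        ((dpCLM l (lam n)).comp
          ((fderiv ℝ g (q ↑n)).comp
            (ContinuousLinearMap.proj (R := ℝ) (↑n : Fin (N + 1))))) q := by
      have hgq := ((hg (q ↑n)).hasFDerivAt).comp q (hproj ↑n)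
      exact ((dpCLM l (lam n)).hasFDerivAt).comp q hgq
    have h4 : HasFDerivAt (fun q' : Fin (N + 1) → Fin m → ℝ => lam (n + 1) ⬝ᵥ g (q' (↑n + 1)))
        ((dpCLM l (lam (n + 1))).comp
          ((fderiv ℝ g (q (↑n + 1))).comp
            (ContinuousLinearMap.proj (R := ℝ) ((↑n : Fin (N + 1)) + 1)))) q := by
      have hgq := ((hg (q (↑n + 1))).hasFDerivAt).comp q (hproj (↑n + 1))
      exact ((dpCLM l (lam (n + 1))).hasFDerivAt).comp q hgq
    exact h2.sub ((h3.add h4).const_mul (1 / 2))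
  have hS : HasFDerivAt Sd (∑ n ∈ range N, T n) q := by
    rw [hSd]; exact HasFDerivAt.fun_sum hT
  have key : ∀ δ : Fin (N + 1) → Fin m → ℝ,
      fderiv ℝ Sd q δ = ∑ n ∈ range N, (P n (δ ↑n) + Q n (δ (↑n + 1))) := by
    intro δ
    rw [hS.fderiv, ContinuousLinearMap.sum_apply]
    refine Finset.sum_congr rfl fun n _ => ?_
    simp only [hTdef, ContinuousLinearMap.sub_apply, ContinuousLinearMap.coe_comp',
      Function.comp_apply, ContinuousLinearMap.prod_apply, ContinuousLinearMap.proj_apply,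
      ContinuousLinearMap.smul_apply, ContinuousLinearMap.add_apply, dpCLM_apply, smul_eq_mul]
    rw [hsplit (q ↑n) (q (↑n + 1)) (δ ↑n) (δ (↑n + 1))]
    simp only [hP, hQ]
    ring
  -- cast injectivity
  have hcast : ∀ a b : ℕ, a < N + 1 → b < N + 1 →
      ((a : Fin (N + 1)) = (b : Fin (N + 1)) ↔ a = b) := by
    intro a b ha hb
    constructor
    · intro h
      have := congrArg Fin.val h
      rwa [Fin.val_cast_of_lt ha, Fin.val_cast_of_lt hb] at this
    · rintro rfl; rfl
  constructor
  · -- stationary ⇒ EL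
    intro hstat n hn1 hn2 v
    have hnN : n < N := lt_of_le_of_lt hn2 (by omega)
    have hn' : ((n - 1 : ℕ) : Fin (N + 1)) + 1 = (n : Fin (N + 1)) := by
      rw [← cAdd (n - 1)]; congr 1; omega
    have hn'' : ((n - 1 : ℕ) : Fin (N + 1)) = (n : Fin (N + 1)) - 1 := eq_sub_of_add_eq hn'
    set δ : Fin (N + 1) → Fin m → ℝ := fun j => if j = (n : Fin (N + 1)) then v else 0 with hδ
    have hδ0 : δ 0 = 0 := by
      simp only [hδ]
      rw [if_neg]
      intro h
      have h0' : ((0 : ℕ) : Fin (N + 1)) = (n : Fin (N + 1)) := by rw [Nat.cast_zero]; exact h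
      have := (hcast 0 n (by omega) (by omega)).mp h0'
      omega
    have hδN : δ (N : Fin (N + 1)) = 0 := by
      simp only [hδ]
      rw [if_neg]
      intro h
      have := (hcast N n (by omega) (by omega)).mp h
      omega
    have h0 := hstat δ hδ0 hδN
    rw [key δ, Finset.sum_add_distrib] at h0
    have e1 : ∑ k ∈ range N, P k (δ ↑k) = P n v := by
      rw [Finset.sum_eq_single_of_mem n (Finset.mem_range.mpr hnN)]
      · simp only [hδ, if_pos rfl]
      · intro k hk hkn
        have hz : δ ↑k = 0 := by
          simp only [hδ]
          rw [if_neg]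
          intro h
          exact hkn ((hcast k n (by simp at hk; omega) (by omega)).mp h)
        rw [hz, hP0]
    have e2 : ∑ k ∈ range N, Q k (δ (↑k + 1)) = Q (n - 1) v := by
      rw [Finset.sum_eq_single_of_mem (n - 1) (Finset.mem_range.mpr (by omega))]
      · rw [hn']
        simp only [hδ, if_pos rfl]
      · intro k hk hkn
        have hz : δ (↑k + 1) = 0 := by
          simp only [hδ]
          rw [if_neg]
          rw [← cAdd k]
          intro h
          have := (hcast (k + 1) n (by simp at hk; omega) (by omega)).mp h
          omega
        rw [hz, hQ0]
    rw [e1, e2] at h0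
    have hlam : n - 1 + 1 = n := by omega
    have hn3 : (↑n : Fin (N + 1)) - 1 + 1 = (↑n : Fin (N + 1)) := by rw [← hn'', hn']
    simp only [hP, hQ, hlam, hn', hn'', hn3] at h0
    linarith
  · -- EL ⇒ stationary
    intro hEL δ hδ0 hδN
    rw [key δ]
    obtain ⟨M, rfl⟩ : ∃ M, N = M + 1 := ⟨N - 1, by omega⟩
    rw [cAdd M] at hδN
    rw [Finset.sum_add_distrib, Finset.sum_range_succ', Finset.sum_range_succ]
    have c0 : ((0 : ℕ) : Fin (M + 1 + 1)) = 0 := Nat.cast_zero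
    rw [c0, hδ0, hP0, hδN, hQ0, add_zero, add_zero, ← Finset.sum_add_distrib]
    refine Finset.sum_eq_zero fun i hi => ?_
    have hi' : i < M := Finset.mem_range.mp hi
    have h := hEL (i + 1) (by omega) (by omega) (δ ↑(i + 1))
    have hsub : ((i + 1 : ℕ) : Fin (M + 1 + 1)) - 1 = (i : Fin (M + 1 + 1)) := by
      rw [cAdd i]; exact add_sub_cancel_right _ 1
    rw [hsub] at h
    simp only [hP, hQ, cAdd] at h ⊢
    linarith
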